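/- The function Ψ'(x) = d/dx [(2/π) arctan(e^{x/6})] satisfies (1 - ∂_x²)Ψ' ≥ (1/2) Ψ' on ℝ, and consequently (1/2) e^{-|·|} * Ψ' ≤ 2 Ψ' pointwise. -/

import Mathlib

open MeasureTheory Real

noncomputable def gg (x : ℝ) : ℝ := (6*π)⁻¹ * (Real.cosh (x/6))⁻¹

noncomputable def gg1 (x : ℝ) : ℝ :=
  (6*π)⁻¹ * (-(Real.sinh (x/6) * (1/6)) / (Real.cosh (x/6))^2)

noncomputable def gg2 (x : ℝ) : ℝ :=
  (6*π)⁻¹ * -((Real.cosh (x/6) * (1/6) * (1/6) * (Real.cosh (x/6))^2 -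
    Real.sinh (x/6) * (1/6) * (2 * Real.cosh (x/6) * (Real.sinh (x/6) * (1/6)))) /
    ((Real.cosh (x/6))^2)^2)

lemma hasDerivAt_Psi (x : ℝ) :
    HasDerivAt (fun x : ℝ => (2/π) * Real.arctan (Real.exp (x/6))) (gg x) x := by
  have h1 : HasDerivAt (fun x : ℝ => Real.exp (x/6)) (Real.exp (x/6) * (1/6)) x := by
    simpa [Function.comp_def] using (Real.hasDerivAt_exp (x/6)).comp x ((hasDerivAt_id x).div_const 6)
  have h2 := ((Real.hasDerivAt_arctan (Real.exp (x/6))).comp x h1).const_mul (2/π)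
  refine h2.congr_deriv ?_
  have hπ := Real.pi_pos
  have hE := Real.exp_pos (x/6)
  rw [gg, Real.cosh_eq, Real.exp_neg]
  field_simp
  ring

lemma hasDerivAt_cosh6 (x : ℝ) :
    HasDerivAt (fun x : ℝ => Real.cosh (x/6)) (Real.sinh (x/6) * (1/6)) x := by
  simpa [Function.comp_def] using (Real.hasDerivAt_cosh (x/6)).comp x ((hasDerivAt_id x).div_const 6)

lemma hasDerivAt_sinh6 (x : ℝ) :
    HasDerivAt (fun x : ℝ => Real.sinh (x/6)) (Real.cosh (x/6) * (1/6)) x := by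
  simpa [Function.comp_def] using (Real.hasDerivAt_sinh (x/6)).comp x ((hasDerivAt_id x).div_const 6)

lemma hasDerivAt_gg (x : ℝ) : HasDerivAt gg (gg1 x) x := by
  have h := ((hasDerivAt_cosh6 x).inv (Real.cosh_pos (x/6)).ne').const_mul ((6*π)⁻¹)
  have : gg = fun y : ℝ => (6*π)⁻¹ * (Real.cosh (y/6))⁻¹ := rfl
  rw [this, gg1]
  exact h

lemma hasDerivAt_gg1 (x : ℝ) : HasDerivAt gg1 (gg2 x) x := by
  have hd : HasDerivAt (fun y : ℝ => (Real.cosh (y/6))^2)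
      (2 * Real.cosh (x/6) * (Real.sinh (x/6) * (1/6))) x := by
    have := (hasDerivAt_cosh6 x).pow 2
    refine this.congr_deriv ?_; ring
  have h := (((hasDerivAt_sinh6 x).mul_const (1/6)).div hd
      (pow_ne_zero 2 (Real.cosh_pos (x/6)).ne')).neg.const_mul ((6*π)⁻¹)
  have : gg1 = fun y : ℝ =>
      (6*π)⁻¹ * (-(Real.sinh (y/6) * (1/6) / (Real.cosh (y/6))^2)) := by
    funext y; rw [gg1]; ring
  rw [this, gg2]
  exact h

lemma gg_pos (x : ℝ) : 0 < gg x := by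
  rw [gg]
  have := Real.pi_pos
  positivity

lemma part1 (x : ℝ) : (1/2) * gg x ≤ gg x - gg2 x := by
  rw [← sub_nonneg]
  have hc : (0:ℝ) < Real.cosh (x/6) := Real.cosh_pos _
  have hπ : (0:ℝ) < π := Real.pi_pos
  have h : gg x - gg2 x - 1/2 * gg x =
      (17 * Real.cosh (x/6)^2 + 2) / (216 * π * Real.cosh (x/6)^3) := by
    have hs := Real.sinh_sq (x/6)
    rw [gg, gg2]
    field_simp
    linear_combination (-864) * hs
  rw [h]
  positivity

-- cosh(x/6) ≤ cosh(t/6) * exp(|x-t|/6)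
lemma cosh_shift (x t : ℝ) :
    Real.cosh (x/6) ≤ Real.cosh (t/6) * Real.exp (|x - t|/6) := by
  have hd : x/6 = t/6 + (x-t)/6 := by ring
  rw [hd, Real.cosh_add]
  have h1 : |Real.sinh (t/6)| ≤ Real.cosh (t/6) := by
    nlinarith [Real.sinh_sq (t/6), Real.cosh_pos (t/6), abs_nonneg (Real.sinh (t/6)),
      sq_abs (Real.sinh (t/6))]
  have h2 : Real.sinh (t/6) * Real.sinh ((x-t)/6) ≤
      Real.cosh (t/6) * |Real.sinh ((x-t)/6)| := by
    calc Real.sinh (t/6) * Real.sinh ((x-t)/6) ≤ |Real.sinh (t/6) * Real.sinh ((x-t)/6)| :=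
          le_abs_self _
      _ = |Real.sinh (t/6)| * |Real.sinh ((x-t)/6)| := abs_mul _ _
      _ ≤ Real.cosh (t/6) * |Real.sinh ((x-t)/6)| := by
          exact mul_le_mul_of_nonneg_right h1 (abs_nonneg _)
  have h3 : Real.cosh ((x-t)/6) + |Real.sinh ((x-t)/6)| = Real.exp (|x-t|/6) := by
    rw [Real.abs_sinh, ← Real.cosh_abs ((x-t)/6), ← Real.cosh_add_sinh]
    congr 2 <;> rw [abs_div, abs_of_pos (by norm_num : (0:ℝ) < 6)]
  nlinarith [Real.cosh_pos (t/6)]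

lemma integrable_exp_abs : Integrable (fun s : ℝ => Real.exp (-(5/6*|s|))) := by
  have hIoi : IntegrableOn (fun s : ℝ => Real.exp (-(5/6*|s|))) (Set.Ioi 0) := by
    refine ((exp_neg_integrableOn_Ioi 0 (by norm_num : (0:ℝ) < 5/6)).congr_fun
      (fun s hs => ?_) measurableSet_Ioi)
    rw [abs_of_pos hs]; ring_nf
  have hIic : IntegrableOn (fun s : ℝ => Real.exp (-(5/6*|s|))) (Set.Iic 0) := by
    rw [← Measure.map_neg_eq_self (volume : Measure ℝ)]
    have m : MeasurableEmbedding fun x : ℝ => -x := (Homeomorph.neg ℝ).measurableEmbedding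
    rw [m.integrableOn_map_iff]
    simp_rw [Function.comp_def, abs_neg, Set.neg_preimage, Set.neg_Iic, neg_zero]
    exact Iff.mpr integrableOn_Ici_iff_integrableOn_Ioi hIoi
  have := hIic.union hIoi
  rwa [Set.Iic_union_Ioi, integrableOn_univ] at this

lemma integral_exp_abs : (∫ s : ℝ, Real.exp (-(5/6*|s|))) = 12/5 := by
  rw [integral_comp_abs (f := fun y : ℝ => Real.exp (-(5/6*y)))]
  have h := integral_comp_mul_left_Ioi (fun y : ℝ => Real.exp (-y)) 0
    (by norm_num : (0:ℝ) < 5/6)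
  simp only [mul_zero] at h
  rw [show (fun y : ℝ => Real.exp (-(5/6*y))) = fun y : ℝ => (fun z : ℝ => Real.exp (-z)) (5/6*y) from rfl, h,
    integral_exp_neg_Ioi]
  norm_num

lemma gg_cont : Continuous gg := by
  have : Continuous fun t : ℝ => Real.cosh (t/6) :=
    Real.continuous_cosh.comp (continuous_id.div_const 6)
  exact continuous_const.mul (this.inv₀ fun t => (Real.cosh_pos _).ne')

lemma gg_shift (x t : ℝ) : gg t ≤ gg x * Real.exp (|x - t|/6) := by
  have hcx := Real.cosh_pos (x/6)
  have hct := Real.cosh_pos (t/6)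
  have hπ := Real.pi_pos
  have h := cosh_shift x t
  rw [gg, gg, mul_assoc]
  apply mul_le_mul_of_nonneg_left _ (by positivity)
  rw [inv_eq_one_div, inv_eq_one_div, div_mul_eq_mul_div, div_le_div_iff₀ hct hcx]
  nlinarith [Real.exp_pos (|x - t|/6)]

lemma part2 (x : ℝ) : (∫ t, (1/2) * Real.exp (-|x - t|) * gg t) ≤ 2 * gg x := by
  set F : ℝ → ℝ := fun t => (1/2) * Real.exp (-|x - t|) * gg t with hF
  set G : ℝ → ℝ := fun t => (1/2) * Real.exp (-(5/6*|t - x|)) * gg x with hG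
  have key : ∀ t, F t ≤ G t := by
    intro t
    have h1 := gg_shift x t
    have h2 : Real.exp (-|x - t|) * Real.exp (|x - t|/6) = Real.exp (-(5/6*|t - x|)) := by
      rw [← Real.exp_add, abs_sub_comm x t]
      ring_nf
    calc F t ≤ (1/2) * Real.exp (-|x - t|) * (gg x * Real.exp (|x - t|/6)) := by
          apply mul_le_mul_of_nonneg_left h1 (by positivity)
      _ = G t := by rw [hG]; dsimp only; rw [← h2]; ring
  have hFpos : ∀ t, 0 ≤ F t := fun t => by
    have := (gg_pos t).le
    positivity
  have hGpos : ∀ t, 0 ≤ G t := fun t => by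
    have := (gg_pos x).le
    positivity
  have h_int : Integrable G :=
    ((integrable_exp_abs.comp_sub_right x).const_mul (1/2)).mul_const (gg x)
  have hFcont : Continuous F := by
    apply Continuous.mul _ gg_cont
    exact continuous_const.mul
      (Real.continuous_exp.comp (((continuous_const.sub continuous_id).abs).neg))
  have h_lhs : Integrable F := by
    refine h_int.mono hFcont.aestronglyMeasurable (ae_of_all _ fun t => ?_)
    rw [Real.norm_eq_abs, Real.norm_eq_abs, abs_of_nonneg (hFpos t), abs_of_nonneg (hGpos t)]
    exact key t
  calc (∫ t, F t) ≤ ∫ t, G t := integral_mono h_lhs h_int key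
    _ = (1/2) * (12/5) * gg x := by
        rw [hG]
        simp_rw [mul_assoc]
        rw [MeasureTheory.integral_const_mul, MeasureTheory.integral_mul_const,
          integral_sub_right_eq_self (fun s : ℝ => Real.exp (-(5/6*|s|))) x,
          integral_exp_abs]
    _ ≤ 2 * gg x := by nlinarith [gg_pos x]

theorem stmt9 :
    let Ψ : ℝ → ℝ := fun x => (2/π) * Real.arctan (Real.exp (x/6))
    let Ψ' : ℝ → ℝ := deriv Ψ
    (∀ x : ℝ, (1/2) * Ψ' x ≤ Ψ' x - deriv (deriv Ψ') x) ∧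
    (∀ x : ℝ, (∫ t, (1/2) * Real.exp (-|x - t|) * Ψ' t) ≤ 2 * Ψ' x) := by
  intro Ψ Ψ'
  have hΨ' : Ψ' = gg := funext fun x => (hasDerivAt_Psi x).deriv
  have e1 : deriv Ψ' = gg1 := by
    rw [hΨ']; exact funext fun y => (hasDerivAt_gg y).deriv
  have e2 : deriv (deriv Ψ') = gg2 := by
    rw [e1]; exact funext fun y => (hasDerivAt_gg1 y).deriv
  constructor
  · intro x
    rw [e2, hΨ']
    exact part1 x
  · intro x
    rw [hΨ']
    exact part2 x
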